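/- Let k be a field of characteristic 2, let λ, μ ∈ k satisfy λ² + λμ + μ² ≠ 0, and set x = λ(s−1) + μ(t−1) in kQ₈. Set M = kQ₈·(z−1)·x and N = kQ₈·x. Then the set of z-fixed points of N equals kQ₈·(z−1); that is, {a ∈ N : z·a = a} = kQ₈·(z−1), and in particular M ⊆ kQ₈·(z−1). -/

import Mathlib

/-- The quaternion group of order 8. -/
abbrev Q8 : Type := QuaternionGroup 2

/-- The generator `s` of `Q₈`, of order 4. -/
def sQ8 : Q8 := QuaternionGroup.a 1

/-- The generator `t` of `Q₈`, satisfying `t² = s²` and `t·s·t⁻¹ = s⁻¹`. -/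
def tQ8 : Q8 := QuaternionGroup.xa 0

/-- The unique central involution `z = s²` of `Q₈`. -/
def zQ8 : Q8 := sQ8 * sQ8

open MonoidAlgebra QuaternionGroup

section Aux

set_option maxHeartbeats 2000000

variable {k : Type} [Field k]

lemma ma_add_apply (f g : MonoidAlgebra k Q8) (x : Q8) : (f + g).coeff x = f.coeff x + g.coeff x :=
  Finsupp.add_apply f.coeff g.coeff x
lemma ma_sub_apply (f g : MonoidAlgebra k Q8) (x : Q8) : (f - g).coeff x = f.coeff x - g.coeff x :=
  Finsupp.sub_apply f.coeff g.coeff x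
lemma ma_neg_apply (f : MonoidAlgebra k Q8) (x : Q8) : (-f).coeff x = -(f.coeff x) :=
  Finsupp.neg_apply f.coeff x
lemma ma_smul_apply (c : k) (f : MonoidAlgebra k Q8) (x : Q8) : (c • f).coeff x = c * f.coeff x :=
  Finsupp.smul_apply c f.coeff x
lemma ma_single_apply (g x : Q8) (b : k) :
    (single g b : MonoidAlgebra k Q8).coeff x = if g = x then b else 0 :=
  Finsupp.single_apply
lemma ma_one_apply (x : Q8) : (1 : MonoidAlgebra k Q8).coeff x = if (1:Q8) = x then 1 else 0 :=
  Finsupp.single_apply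

/-- `z` is central in `kQ₈`. -/
lemma zcent (b : MonoidAlgebra k Q8) : single zQ8 (1:k) * b = b * single zQ8 1 := by
  ext g
  rw [MonoidAlgebra.single_mul_apply, MonoidAlgebra.mul_single_apply, one_mul, mul_one]
  congr 1
  revert g; decide

/-- Any `z`-fixed element of `kQ₈` lies in `kQ₈·(z-1)` (char 2). -/
lemma kerlem [CharP k 2] (f : MonoidAlgebra k Q8)
    (ha : single zQ8 (1:k) * f = f) :
    ∃ b : MonoidAlgebra k Q8, b * (single zQ8 (1:k) - 1) = f := by
  have ha' : ∀ g : Q8, f.coeff (zQ8⁻¹ * g) = f.coeff g := by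
    intro g
    have := congrArg (fun q => q.coeff g) ha
    rwa [MonoidAlgebra.single_mul_apply, one_mul] at this
  have key : ∀ g g' : Q8, zQ8⁻¹ * g = g' → f.coeff g' = f.coeff g := fun g g' h => h ▸ ha' g
  have e1 : f.coeff (QuaternionGroup.a 0) = f.coeff (QuaternionGroup.a 2) := key _ _ (by decide)
  have e2 : f.coeff (QuaternionGroup.a 1) = f.coeff (QuaternionGroup.a 3) := key _ _ (by decide)
  have e3 : f.coeff (xa 0) = f.coeff (xa 2) := key _ _ (by decide)
  have e4 : f.coeff (xa 1) = f.coeff (xa 3) := key _ _ (by decide)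
  refine ⟨single (QuaternionGroup.a 0) (f.coeff (QuaternionGroup.a 0))
      + single (QuaternionGroup.a 1) (f.coeff (QuaternionGroup.a 1))
      + single (xa 0) (f.coeff (xa 0)) + single (xa 1) (f.coeff (xa 1)), ?_⟩
  ext g
  rw [mul_sub, mul_one, ma_sub_apply, MonoidAlgebra.mul_single_apply, mul_one]
  rcases g with i | i <;> fin_cases i <;>
    simp (config := { decide := true }) [ma_add_apply, ma_single_apply, Finsupp.single_apply] <;>
    first
      | exact CharTwo.neg_eq _
      | exact e1 | exact e2 | exact e3 | exact e4

/-- `x² = (z+1)·w` with `w = (λ²+μ²)·1 + λμ·st`. -/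
lemma h1 [CharP k 2] (lam mu : k) :
    (lam • (single sQ8 (1:k) - 1) + mu • (single tQ8 1 - 1)) *
      (lam • (single sQ8 (1:k) - 1) + mu • (single tQ8 1 - 1))
    = (single zQ8 (1:k) + 1) * ((lam^2+mu^2) • 1 + (lam*mu) • single (xa 3) 1) := by
  have h2 : (2:k) = 0 := by
    have := CharP.cast_eq_zero k 2; simpa using this
  simp only [sub_mul, mul_sub, add_mul, mul_add, mul_smul_comm, smul_mul_assoc, smul_smul,
    one_mul, mul_one, MonoidAlgebra.single_mul_single, smul_sub, smul_add]
  ext g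
  rcases g with i | i <;> fin_cases i <;>
    simp (config := { decide := true }) [ma_add_apply, ma_sub_apply, ma_neg_apply,
      ma_smul_apply, ma_single_apply, ma_one_apply, Finsupp.single_apply] <;>
    first
      | ring1
      | linear_combination (-(lam^2) - lam*mu) * h2
      | linear_combination (-(lam*mu) - mu^2) * h2
      | linear_combination (lam*mu) * h2

/-- `w⁴ = (λ²+λμ+μ²)⁴ · 1`. -/
lemma h4w [CharP k 2] (lam mu : k) :
    (((lam^2+mu^2) • 1 + (lam*mu) • single (xa 3) 1) *
        ((lam^2+mu^2) • 1 + (lam*mu) • single (xa 3) 1)) *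
      (((lam^2+mu^2) • 1 + (lam*mu) • single (xa 3) 1) *
        ((lam^2+mu^2) • (1 : MonoidAlgebra k Q8) + (lam*mu) • single (xa 3) 1))
    = ((lam^2+lam*mu+mu^2)^4) • 1 := by
  have h2 : (2:k) = 0 := by
    have := CharP.cast_eq_zero k 2; simpa using this
  simp only [add_mul, mul_add, mul_smul_comm, smul_mul_assoc, smul_smul,
    one_mul, mul_one, MonoidAlgebra.single_mul_single, smul_add]
  ext g
  rcases g with i | i <;> fin_cases i <;>
    simp (config := { decide := true }) [ma_add_apply, ma_smul_apply,
      ma_single_apply, ma_one_apply, Finsupp.single_apply] <;>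
    first
      | ring1
      | linear_combination (-(2*lam*mu^7 + 3*lam^2*mu^6 + 8*lam^3*mu^5 + 6*lam^4*mu^4
            + 8*lam^5*mu^3 + 3*lam^6*mu^2 + 2*lam^7*mu)) * h2
      | linear_combination (3*lam^2*mu^6 + 6*lam^4*mu^4 + 3*lam^6*mu^2) * h2
      | linear_combination (2*lam^3*mu^5 + 2*lam^5*mu^3) * h2
      | linear_combination (2*lam*mu^7 + 6*lam^3*mu^5 + 6*lam^5*mu^3 + 2*lam^7*mu) * h2

end Aux

theorem stmt18 (k : Type) [Field k] [CharP k 2]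
    (lam mu : k) (h : lam ^ 2 + lam * mu + mu ^ 2 ≠ 0)
    (x : MonoidAlgebra k Q8)
    (hx : x = lam • (MonoidAlgebra.of k Q8 sQ8 - 1) +
        mu • (MonoidAlgebra.of k Q8 tQ8 - 1))
    (M N : Submodule (MonoidAlgebra k Q8) (MonoidAlgebra k Q8))
    (hM : M = Submodule.span (MonoidAlgebra k Q8)
        {(MonoidAlgebra.of k Q8 zQ8 - 1) * x})
    (hN : N = Submodule.span (MonoidAlgebra k Q8) {x}) :
    {a : MonoidAlgebra k Q8 | a ∈ N ∧ MonoidAlgebra.of k Q8 zQ8 * a = a}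
        = (Submodule.span (MonoidAlgebra k Q8) {MonoidAlgebra.of k Q8 zQ8 - 1}
            : Submodule (MonoidAlgebra k Q8) (MonoidAlgebra k Q8)) ∧
      M ≤ Submodule.span (MonoidAlgebra k Q8) {MonoidAlgebra.of k Q8 zQ8 - 1} := by
  haveI : CharP (MonoidAlgebra k Q8) 2 :=
    charP_of_injective_algebraMap (algebraMap k (MonoidAlgebra k Q8)).injective 2
  obtain ⟨Z, hZ⟩ : ∃ Z' : MonoidAlgebra k Q8, Z' = single zQ8 (1:k) := ⟨_, rfl⟩
  have hof : MonoidAlgebra.of k Q8 zQ8 = Z := by rw [hZ]; rfl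
  obtain ⟨w, hw⟩ : ∃ w' : MonoidAlgebra k Q8,
      w' = (lam^2+mu^2) • 1 + (lam*mu) • single (xa 3) 1 := ⟨_, rfl⟩
  have hZc : ∀ b : MonoidAlgebra k Q8, Z * b = b * Z := by
    intro b; rw [hZ]; exact zcent b
  have hZx : ∀ b : MonoidAlgebra k Q8, (Z - 1) * b = b * (Z - 1) := by
    intro b
    rw [sub_mul, mul_sub, one_mul, mul_one, hZc]
  have hZZ : Z * (Z - 1) = Z - 1 := by
    rw [mul_sub, mul_one, hZ, MonoidAlgebra.single_mul_single, one_mul]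
    have hzz : (zQ8 * zQ8 : Q8) = 1 := by decide
    rw [hzz, ← MonoidAlgebra.one_def, CharTwo.sub_eq_add, CharTwo.sub_eq_add, add_comm]
  have hx2 : x * x = (Z + 1) * w := by
    rw [hx, hZ, hw]; exact h1 lam mu
  have hcw : (Z + 1) * w = w * (Z + 1) := by
    rw [add_mul, mul_add, one_mul, mul_one, hZc]
  have hww : (w * w) * (w * w) = ((lam^2+lam*mu+mu^2)^4) • 1 := by
    rw [hw]; exact h4w lam mu
  have main : (w * w * w * x) * x = ((lam^2+lam*mu+mu^2)^4) • (Z - 1) := by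
    calc (w * w * w * x) * x = w * w * w * (x * x) := by rw [mul_assoc]
      _ = w * w * w * ((Z + 1) * w) := by rw [hx2]
      _ = w * w * w * (w * (Z + 1)) := by rw [hcw]
      _ = ((w * w) * (w * w)) * (Z + 1) := by noncomm_ring
      _ = (((lam^2+lam*mu+mu^2)^4) • 1) * (Z + 1) := by rw [hww]
      _ = ((lam^2+lam*mu+mu^2)^4) • (Z + 1) := by rw [smul_mul_assoc, one_mul]
      _ = ((lam^2+lam*mu+mu^2)^4) • (Z - 1) := by rw [CharTwo.sub_eq_add]
  have hγ : (lam^2+lam*mu+mu^2)^4 ≠ 0 := pow_ne_zero _ h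
  have hZ1N : Z - 1 ∈ N := by
    rw [hN, Submodule.mem_span_singleton]
    refine ⟨((lam^2+lam*mu+mu^2)^4)⁻¹ • (w * w * w * x), ?_⟩
    rw [smul_eq_mul, smul_mul_assoc, main, smul_smul, inv_mul_cancel₀ hγ, one_smul]
  constructor
  · ext a
    simp only [Set.mem_setOf_eq, SetLike.mem_coe]
    constructor
    · rintro ⟨-, hfix⟩
      rw [hof, hZ] at hfix
      obtain ⟨b, hb⟩ := kerlem a hfix
      rw [Submodule.mem_span_singleton]
      exact ⟨b, by rw [smul_eq_mul, hof, hZ]; exact hb⟩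
    · intro ha
      rw [Submodule.mem_span_singleton] at ha
      obtain ⟨c, hc⟩ := ha
      rw [smul_eq_mul, hof] at hc
      constructor
      · rw [← hc, ← smul_eq_mul]
        exact N.smul_mem c hZ1N
      · rw [hof, ← hc, ← mul_assoc, hZc, mul_assoc, hZZ]
  · rw [hM, Submodule.span_le]
    intro y hy
    simp only [Set.mem_singleton_iff] at hy
    subst hy
    rw [SetLike.mem_coe, Submodule.mem_span_singleton]
    exact ⟨x, by rw [smul_eq_mul, hof]; exact (hZx x).symm⟩
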